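/- Let α ∈ (1,2) and fix r > 0. For λ > 0 let v^0_r(λ) ∈ [0, λ^{1/α}) be the unique solution of ∫_0^{v^0_r(λ)} dy/(λ − y^α) = r. Then 0 ≤ v^0_r(λ) ≤ λ r for all λ > 0, and lim_{λ→0+} v^0_r(λ)/λ = r. -/
import Mathlib


open Set Filter MeasureTheory

/-- for fixed `r > 0`, the solution `v^0_r(λ)` of
`∫_0^{v^0_r(λ)} dy/(λ − y^α) = r` satisfies `0 ≤ v^0_r(λ) ≤ λ r` for all `λ > 0`
and `v^0_r(λ)/λ → r` as `λ → 0+`. -/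
theorem stable_v0_small_lambda
    (α r : ℝ) (hα1 : 1 < α) (hα2 : α < 2) (hr : 0 < r)
    (v0 : ℝ → ℝ)
    (hv0 : ∀ lam > (0:ℝ), v0 lam ∈ Set.Ico 0 (lam ^ (1 / α)) ∧
      ∫ y in (0:ℝ)..v0 lam, (lam - y ^ α)⁻¹ = r) :
    (∀ lam > (0:ℝ), 0 ≤ v0 lam ∧ v0 lam ≤ lam * r) ∧
      Filter.Tendsto (fun lam : ℝ => v0 lam / lam)
        (nhdsWithin 0 (Set.Ioi 0)) (nhds r) := by
  have hα0 : (0:ℝ) < α := by linarith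
  have key : ∀ lam > (0:ℝ), 0 ≤ v0 lam ∧ v0 lam ≤ lam * r ∧
      r * (lam - (v0 lam) ^ α) ≤ v0 lam := by
    intro lam hlam
    obtain ⟨⟨h0, hlt⟩, hint⟩ := hv0 lam hlam
    have hva : (v0 lam) ^ α < lam := by
      have h1 : (v0 lam) ^ α < (lam ^ (1/α)) ^ α := Real.rpow_lt_rpow h0 hlt hα0
      have h2 : (lam ^ (1/α)) ^ α = lam := by
        rw [← Real.rpow_mul hlam.le, one_div_mul_cancel hα0.ne', Real.rpow_one]
      rwa [h2] at h1
    have hrpc : Continuous fun y : ℝ => y ^ α :=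
      continuous_iff_continuousAt.mpr fun y =>
        Real.continuousAt_rpow_const y α (Or.inr hα0.le)
    have hpos : ∀ y ∈ Icc 0 (v0 lam), 0 < lam - y ^ α := by
      intro y hy
      have : y ^ α ≤ (v0 lam) ^ α := Real.rpow_le_rpow hy.1 hy.2 hα0.le
      linarith
    have hcont : ContinuousOn (fun y : ℝ => (lam - y ^ α)⁻¹) (Icc 0 (v0 lam)) := by
      apply ContinuousOn.inv₀ (continuousOn_const.sub hrpc.continuousOn)
      intro y hy
      exact (hpos y hy).ne'
    have hInt : IntervalIntegrable (fun y : ℝ => (lam - y ^ α)⁻¹) volume 0 (v0 lam) :=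
      hcont.intervalIntegrable_of_Icc h0
    have hub : v0 lam * lam⁻¹ ≤ r := by
      have hmono := intervalIntegral.integral_mono_on h0
        (intervalIntegrable_const (c := lam⁻¹)) hInt (fun y hy => by
          have hynn : (0:ℝ) ≤ y ^ α := Real.rpow_nonneg hy.1 α
          have := hpos y hy
          exact inv_anti₀ this (by linarith))
      rw [hint, intervalIntegral.integral_const] at hmono
      simpa using hmono
    have hlb : r ≤ v0 lam * (lam - (v0 lam) ^ α)⁻¹ := by
      have hmono := intervalIntegral.integral_mono_on h0 hInt
        (intervalIntegrable_const (c := (lam - (v0 lam) ^ α)⁻¹)) (fun y hy => by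
          have : y ^ α ≤ (v0 lam) ^ α := Real.rpow_le_rpow hy.1 hy.2 hα0.le
          have hvpos : 0 < lam - (v0 lam) ^ α := by linarith
          exact inv_anti₀ hvpos (by linarith))
      rw [hint, intervalIntegral.integral_const] at hmono
      simpa using hmono
    have hvpos : 0 < lam - (v0 lam) ^ α := by linarith
    refine ⟨h0, ?_, ?_⟩
    · rw [← div_eq_mul_inv, div_le_iff₀ hlam] at hub
      linarith
    · rw [← div_eq_mul_inv, le_div_iff₀ hvpos] at hlb
      linarith
  have hsq : ∀ lam ∈ Ioi (0:ℝ), r - r * r ^ α * lam ^ (α - 1) ≤ v0 lam / lam := by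
    intro lam hlam
    obtain ⟨h0, hub, hlb⟩ := key lam hlam
    have hvpow : (v0 lam) ^ α ≤ lam ^ α * r ^ α := by
      calc (v0 lam) ^ α ≤ (lam * r) ^ α := Real.rpow_le_rpow h0 hub hα0.le
        _ = lam ^ α * r ^ α := Real.mul_rpow (le_of_lt hlam) hr.le
    have hpow : lam ^ (α - 1) * lam = lam ^ α := by
      rw [← Real.rpow_add_one (ne_of_gt hlam) (α - 1), sub_add_cancel]
    rw [le_div_iff₀ hlam]
    have h1 : r * (v0 lam) ^ α ≤ r * (lam ^ α * r ^ α) :=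
      mul_le_mul_of_nonneg_left hvpow hr.le
    have h2 : (r - r * r ^ α * lam ^ (α - 1)) * lam = r * lam - r * (lam ^ α * r ^ α) := by
      rw [← hpow]; ring
    rw [h2]
    linarith
  have htend0 : Tendsto (fun lam : ℝ => lam ^ (α - 1)) (nhdsWithin 0 (Ioi 0)) (nhds 0) := by
    have hc := (Real.continuousAt_rpow_const 0 (α - 1) (Or.inr (by linarith))).tendsto
    rw [Real.zero_rpow (by intro h; linarith [h] : α - 1 ≠ 0)] at hc
    exact hc.mono_left nhdsWithin_le_nhds
  have hg : Tendsto (fun lam : ℝ => r - r * r ^ α * lam ^ (α - 1))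
      (nhdsWithin 0 (Ioi 0)) (nhds r) := by
    have h2 := (tendsto_const_nhds (x := r) (f := nhdsWithin (0:ℝ) (Ioi 0))).sub
      (htend0.const_mul (r * r ^ α))
    simpa using h2
  refine ⟨fun lam hlam => ⟨(key lam hlam).1, (key lam hlam).2.1⟩, ?_⟩
  refine tendsto_of_tendsto_of_tendsto_of_le_of_le' hg tendsto_const_nhds ?_ ?_
  · filter_upwards [self_mem_nhdsWithin] with lam hlam
    exact hsq lam hlam
  · filter_upwards [self_mem_nhdsWithin] with lam hlam
    obtain ⟨h0, hub, -⟩ := key lam hlam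
    rw [div_le_iff₀ hlam]
    linarith
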